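/- The odd writhe polynomial is invariant under the Gauss-diagram Reidemeister move Ω2: if two chords c_m, c_n have opposite signs, with their two 'over' endpoints adjacent on one arc and their two 'under' endpoints adjacent on another arc (in the configuration of the Ω2 move), then deleting both chords does not change f(t). -/

import Mathlib

open Finset LaurentPolynomial

/-- A signed, oriented chord diagram (combinatorial Gauss diagram) with `n` chords:
the `2*n` chord endpoints on the circle are the elements of `Fin (2*n)` in (positive)
cyclic order; chord `i` has over endpoint `c⁺ = ep (i, true)`, under endpoint
`c⁻ = ep (i, false)` and a sign (writhe) `sign i ∈ {1, -1}`. -/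
structure ChordDiagram (n : ℕ) where
  ep : Fin n × Bool ≃ Fin (2 * n)
  sign : Fin n → ℤ
  sign_unit : ∀ i, sign i = 1 ∨ sign i = -1

namespace ChordDiagram

variable {n : ℕ}

/-- the over endpoint `c⁺` of a chord -/
def _root_.ChordDiagram.over (D : ChordDiagram n) (i : Fin n) : Fin (2 * n) := D.ep (i, true)

/-- the under endpoint `c⁻` of a chord -/
def under (D : ChordDiagram n) (i : Fin n) : Fin (2 * n) := D.ep (i, false)

/-- the number of steps from `b` to `x`, travelling in the positive direction
around the circle -/
def relpos (b x : Fin (2 * n)) : ℕ := (x.val + 2 * n - b.val) % (2 * n)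

/-- `x` lies strictly between the endpoints of chord `i`, on the side swept out
going from `c⁺` to `c⁻` in the positive direction -/
def StrictlyBetween (D : ChordDiagram n) (i : Fin n) (x : Fin (2 * n)) : Prop :=
  0 < relpos (D.over i) x ∧ relpos (D.over i) x < relpos (D.over i) (D.under i)

instance (D : ChordDiagram n) (i : Fin n) (x : Fin (2 * n)) :
    Decidable (D.StrictlyBetween i x) := inferInstanceAs (Decidable (_ ∧ _))

/-- two distinct chords interlink if their endpoints alternate around the circle,
i.e. exactly one endpoint of `j` lies strictly between the endpoints of `i` -/
def Interlinks (D : ChordDiagram n) (i j : Fin n) : Prop :=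
  i ≠ j ∧ Xor (D.StrictlyBetween i (D.over j)) (D.StrictlyBetween i (D.under j))

instance (D : ChordDiagram n) (i j : Fin n) : Decidable (D.Interlinks i j) :=
  inferInstanceAs (Decidable (_ ∧ _))

/-- the number of chords interlinking chord `i` -/
def interlinkCount (D : ChordDiagram n) (i : Fin n) : ℕ :=
  (univ.filter fun j => D.Interlinks i j).card

/-- the number of chord endpoints lying (strictly) on one side of chord `i` -/
def sideCount (D : ChordDiagram n) (i : Fin n) : ℕ :=
  (univ.filter fun x => D.StrictlyBetween i x).card

/-- a chord is odd if it interlinks an odd number of other chords -/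
def OddChord (D : ChordDiagram n) (i : Fin n) : Prop := Odd (D.interlinkCount i)

instance (D : ChordDiagram n) (i : Fin n) : Decidable (D.OddChord i) :=
  inferInstanceAs (Decidable (Odd _))

/-- The label `N(a)` of the arc whose terminal point is `a`: the sum of the signs of
all chords whose over endpoint is met strictly before their under endpoint when
traversing the circle once in the positive direction starting inside this arc. -/
def arcLabel (D : ChordDiagram n) (a : Fin (2 * n)) : ℤ :=
  ∑ i ∈ univ.filter fun i => relpos a (D.over i) < relpos a (D.under i), D.sign i

/-- The value `N(c)` of a chord: for a positive chord, the difference `x - y` of the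
arc labels just before `c⁺` and just before `c⁻`; for a negative chord, the difference
`z - w` of the arc labels just after `c⁺` and just after `c⁻` (the label just after an
over endpoint is the label just before it minus the sign, and the label just after an
under endpoint is the label just before it plus the sign). -/
def chordVal (D : ChordDiagram n) (i : Fin n) : ℤ :=
  if D.sign i = 1 then D.arcLabel (D.over i) - D.arcLabel (D.under i)
  else (D.arcLabel (D.over i) - D.sign i) - (D.arcLabel (D.under i) + D.sign i)

/-- the odd writhe `J(K) = Σ_{c odd} w(c)` -/
def oddWrithe (D : ChordDiagram n) : ℤ :=
  ∑ i ∈ univ.filter fun i => D.OddChord i, D.sign i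

/-- the odd writhe polynomial `f_K(t) = Σ_{c odd} w(c) · t^{N(c)} ∈ ℤ[t,t⁻¹]` -/
noncomputable def owp (D : ChordDiagram n) : LaurentPolynomial ℤ :=
  ∑ i ∈ univ.filter fun i => D.OddChord i, C (D.sign i) * T (D.chordVal i)

/-- evaluation of the odd writhe polynomial at a rational number `x`:
`Σ_{c odd} w(c) · x^{N(c)}` -/
def owpEval (D : ChordDiagram n) (x : ℚ) : ℚ :=
  ∑ i ∈ univ.filter fun i => D.OddChord i, (D.sign i : ℚ) * x ^ D.chordVal i

/-- the coefficient of `t^k` in a Laurent polynomial -/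
def coeffOf (f : LaurentPolynomial ℤ) (k : ℤ) : ℤ := f.coeff k

/-- the degree `Deg f = max { |i| : coefficient of tⁱ in f is nonzero }` -/
def owpDeg (f : LaurentPolynomial ℤ) : ℕ := f.coeff.support.sup fun k => k.natAbs

/-- reversing the orientation of the knot: the cyclic order of the endpoints is
reversed, while signs and over/under data of the crossings are preserved -/
def reverse (D : ChordDiagram n) : ChordDiagram n where
  ep := D.ep.trans Fin.revPerm
  sign := D.sign
  sign_unit := D.sign_unit

/-- the mirror image: every crossing is switched, so every chord's over and under
endpoints are exchanged and its sign is negated -/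
def mirror (D : ChordDiagram n) : ChordDiagram n where
  ep := (Equiv.prodCongr (Equiv.refl (Fin n))
      ⟨fun b => !b, fun b => !b, Bool.not_not, Bool.not_not⟩).trans D.ep
  sign := fun i => -D.sign i
  sign_unit := fun i => (D.sign_unit i).elim
    (fun h => Or.inr (show -D.sign i = -1 by rw [h]))
    (fun h => Or.inl (show -D.sign i = 1 by rw [h]; ring))

/-! ### Planarity via the Euler characteristic of the carrier surface

The diagram determines a 4-valent graph (vertices = chords, edges = the `2*n` arcs of
the circle) together with a rotation system at each vertex, coming from the structure
of a transversal crossing: for a positive crossing the counterclockwise order of the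
four ends is (over-out, under-out, over-in, under-in), for a negative crossing it is
(over-out, under-in, over-in, under-out).  The diagram is realizable by a classical
(planar) knot diagram iff the resulting closed oriented carrier surface is a sphere,
i.e. iff `V - E + F = n - 2n + F = 2`.

Darts are encoded as pairs `(p, io) : Fin (2*n) × Bool`, meaning the end of an arc
at the vertex through the circle point `p`, with `io = true` for the outgoing arc
(from `p` to `p+1`) and `io = false` for the incoming arc (from `p-1` to `p`). -/

/-- the other endpoint of the chord through a given endpoint -/
def otherEnd (D : ChordDiagram n) (p : Fin (2 * n)) : Fin (2 * n) :=
  D.ep ((D.ep.symm p).1, !(D.ep.symm p).2)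

lemma otherEnd_otherEnd (D : ChordDiagram n) (p : Fin (2 * n)) :
    D.otherEnd (D.otherEnd p) = p := by
  simp [otherEnd]

/-- whether the rotation at the vertex toggles the in/out marker when passing from
the end at `p` to the end at the other endpoint of its chord -/
def tog (D : ChordDiagram n) (p : Fin (2 * n)) : Bool :=
  if D.sign (D.ep.symm p).1 = 1 then !(D.ep.symm p).2 else (D.ep.symm p).2

/-- the vertex rotation permutation on darts -/
def vertexPerm (D : ChordDiagram n) : Equiv.Perm (Fin (2 * n) × Bool) :=
  Equiv.trans
    ⟨fun x => (x.1, xor x.2 (D.tog x.1)), fun x => (x.1, xor x.2 (D.tog x.1)),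
      fun x => by simp [Bool.xor_assoc], fun x => by simp [Bool.xor_assoc]⟩
    ⟨fun x => (D.otherEnd x.1, x.2), fun x => (D.otherEnd x.1, x.2),
      fun x => by simp [otherEnd_otherEnd], fun x => by simp [otherEnd_otherEnd]⟩

/-- the edge involution on darts, matching the two ends of each arc -/
def arcPerm (D : ChordDiagram n) : Equiv.Perm (Fin (2 * n) × Bool) :=
  ⟨fun x => if x.2 then (finRotate (2 * n) x.1, false) else ((finRotate (2 * n)).symm x.1, true),
   fun x => if x.2 then (finRotate (2 * n) x.1, false) else ((finRotate (2 * n)).symm x.1, true),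
   fun x => by rcases x with ⟨p, _ | _⟩ <;> simp only [Bool.false_eq_true, if_false, if_true, Equiv.apply_symm_apply, Equiv.symm_apply_apply],
   fun x => by rcases x with ⟨p, _ | _⟩ <;> simp only [Bool.false_eq_true, if_false, if_true, Equiv.apply_symm_apply, Equiv.symm_apply_apply]⟩

/-- the face permutation on darts -/
def facePerm (D : ChordDiagram n) : Equiv.Perm (Fin (2 * n) × Bool) :=
  (D.arcPerm).trans D.vertexPerm

/-- the number of faces: the number of orbits of the face permutation -/
noncomputable def faceCount (D : ChordDiagram n) : ℕ :=
  Nat.card (MulAction.orbitRel.Quotient (Subgroup.zpowers D.facePerm) (Fin (2 * n) × Bool))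

/-- the chord diagram arises from a classical (planar) knot diagram: the carrier
surface has Euler characteristic `V - E + F = n - 2n + faceCount = 2` -/
def PlanarRealizable (D : ChordDiagram n) : Prop := D.faceCount = n + 2

lemma relpos_eq (a b : Fin (2*n)) :
    relpos a b = if a.val ≤ b.val then b.val - a.val else b.val + 2*n - a.val := by
  have ha := a.isLt; have hb := b.isLt
  unfold relpos
  split_ifs with h
  · rw [show b.val + 2*n - a.val = (b.val - a.val) + 2*n by omega, Nat.add_mod_right,
      Nat.mod_eq_of_lt (by omega)]
  · rw [Nat.mod_eq_of_lt (by omega)]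

lemma relpos_pos_iff (a b : Fin (2*n)) : 0 < relpos a b ↔ a ≠ b := by
  have ha := a.isLt; have hb := b.isLt
  rw [relpos_eq, Ne, Fin.ext_iff]
  split_ifs <;> omega

lemma relpos_ne_of_ne (a : Fin (2*n)) {x y : Fin (2*n)} (h : x ≠ y) :
    relpos a x ≠ relpos a y := by
  have ha := a.isLt; have hx := x.isLt; have hy := y.isLt
  rw [Ne, Fin.ext_iff] at h
  rw [relpos_eq, relpos_eq]
  split_ifs <;> omega

/-- strictly monotone relabellings preserve relative cyclic order -/
lemma relpos_lt_relpos_map {m : ℕ} (φ : Fin (2*n) → Fin (2*m)) (hφ : StrictMono φ)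
    (a b c : Fin (2*n)) :
    relpos (φ a) (φ b) < relpos (φ a) (φ c) ↔ relpos a b < relpos a c := by
  have ha := a.isLt; have hb := b.isLt; have hc := c.isLt
  have ha' := (φ a).isLt; have hb' := (φ b).isLt; have hc' := (φ c).isLt
  have key : ∀ x y : Fin (2*n), (φ x).val < (φ y).val ↔ x.val < y.val := fun x y => by
    rw [← Fin.lt_def, ← Fin.lt_def, hφ.lt_iff_lt]
  have hab := key a b; have hac := key a c; have hbc := key b c
  have hab' := key b a; have hac' := key c a; have hbc' := key c b
  rw [relpos_eq, relpos_eq, relpos_eq, relpos_eq]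
  split_ifs <;> omega

/-- stepping lemma: if `b` is the successor of `a`, relative order w.r.t. `b`
agrees with that w.r.t. `a` for points distinct from `a` -/
lemma relpos_succ_lt_iff {a b x y : Fin (2*n)} (h : relpos a b = 1)
    (hx : x ≠ a) (hy : y ≠ a) :
    relpos b x < relpos b y ↔ relpos a x < relpos a y := by
  have ha := a.isLt; have hb := b.isLt; have hx' := x.isLt; have hy' := y.isLt
  rw [Ne, Fin.ext_iff] at hx hy
  rw [relpos_eq] at h
  rw [relpos_eq, relpos_eq, relpos_eq, relpos_eq]
  revert h; split_ifs <;> omega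

lemma relpos_succ_eq {a b x : Fin (2*n)} (h : relpos a b = 1) (hx : x ≠ a) :
    relpos a x = relpos b x + 1 := by
  have ha := a.isLt; have hb := b.isLt; have hx' := x.isLt
  rw [Ne, Fin.ext_iff] at hx
  rw [relpos_eq] at h ⊢
  rw [relpos_eq]
  revert h; split_ifs <;> omega

lemma relpos_self (a : Fin (2*n)) : relpos a a = 0 := by
  rw [relpos_eq]; simp

lemma relpos_adj {a b c : Fin (2*n)} (h : relpos b c = 1) (hc : c ≠ a) :
    relpos a c = relpos a b + 1 := by
  have ha := a.isLt; have hb := b.isLt; have hc' := c.isLt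
  rw [Ne, Fin.ext_iff] at hc
  rw [relpos_eq] at h ⊢; rw [relpos_eq]
  revert h; split_ifs <;> omega

lemma relpos_succ_max {a b x : Fin (2*n)} (h : relpos a b = 1) (hx : x ≠ a) :
    relpos b x < relpos b a := by
  have ha := a.isLt; have hb := b.isLt; have hx' := x.isLt
  rw [Ne, Fin.ext_iff] at hx
  rw [relpos_eq] at h ⊢; rw [relpos_eq]
  revert h; split_ifs <;> omega

lemma arcLabel_expand (D : ChordDiagram n) (x : Fin (2*n)) :
    D.arcLabel x = ∑ i : Fin n,
      (if relpos x (D.over i) < relpos x (D.under i) then D.sign i else 0) := by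
  rw [arcLabel, Finset.sum_filter]

/-- crossing one endpoint changes the arc label by the (signed) writhe -/
lemma arcLabel_step (D : ChordDiagram n) (j : Fin n) (bo : Bool) (b : Fin (2*n))
    (h : relpos (D.ep (j, bo)) b = 1) :
    D.arcLabel b = D.arcLabel (D.ep (j, bo))
      + (if bo then -(D.sign j) else D.sign j) := by
  set a := D.ep (j, bo) with ha
  have epne : ∀ (i : Fin n) (b1 : Bool), i ≠ j → D.ep (i, b1) ≠ a :=
    fun i b1 hij => ha ▸ D.ep.injective.ne (fun hh => hij (congrArg Prod.fst hh))
  rw [arcLabel_expand, arcLabel_expand,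
    ← Finset.add_sum_erase _ _ (Finset.mem_univ j),
    ← Finset.add_sum_erase _ (fun i => if relpos a (D.over i) < relpos a (D.under i)
      then D.sign i else 0) (Finset.mem_univ j)]
  have hrest : ∑ i ∈ Finset.univ.erase j,
        (if relpos b (D.over i) < relpos b (D.under i) then D.sign i else 0)
      = ∑ i ∈ Finset.univ.erase j,
        (if relpos a (D.over i) < relpos a (D.under i) then D.sign i else 0) := by
    refine Finset.sum_congr rfl fun i hi => ?_
    have hij := (Finset.mem_erase.mp hi).1
    exact if_congr (relpos_succ_lt_iff h (epne i true hij) (epne i false hij)) rfl rfl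
  rw [hrest]
  have hou : D.over j ≠ D.under j :=
    D.ep.injective.ne (fun hh => Bool.noConfusion (congrArg Prod.snd hh))
  cases bo
  · -- a = under j
    have h1 : ¬ relpos a (D.over j) < relpos a (D.under j) := by
      rw [show D.under j = a from rfl, relpos_self]; omega
    have h2 : relpos b (D.over j) < relpos b (D.under j) := by
      rw [show D.under j = a from rfl]
      exact relpos_succ_max h (by exact hou)
    rw [if_pos h2, if_neg h1]; simp; ring
  · -- a = over j
    have h1 : relpos a (D.over j) < relpos a (D.under j) := by
      rw [show D.over j = a from rfl, relpos_self, relpos_pos_iff]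
      exact fun hh => hou (by rw [show D.over j = a from rfl, hh])
    have h2 : ¬ relpos b (D.over j) < relpos b (D.under j) := by
      rw [show D.over j = a from rfl]
      have := relpos_succ_max h (x := D.under j)
        (fun hh => hou (by rw [show D.over j = a from rfl, hh]))
      omega
    rw [if_pos h1, if_neg h2]; simp

lemma interlinks_symm (D : ChordDiagram n) {i j : Fin n} (h : D.Interlinks i j) :
    D.Interlinks j i := by
  obtain ⟨hne, hx⟩ := h
  refine ⟨hne.symm, ?_⟩
  have epne : ∀ (b1 b2 : Bool), D.ep (i, b1) ≠ D.ep (j, b2) :=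
    fun b1 b2 => D.ep.injective.ne (fun hh => hne (congrArg Prod.fst hh))
  have h1 : D.over i ≠ D.under i :=
    D.ep.injective.ne (fun hh => Bool.noConfusion (congrArg Prod.snd hh))
  have h2 : D.over j ≠ D.under j :=
    D.ep.injective.ne (fun hh => Bool.noConfusion (congrArg Prod.snd hh))
  have h3 : D.over i ≠ D.over j := epne true true
  have h4 : D.over i ≠ D.under j := epne true false
  have h5 : D.under i ≠ D.over j := epne false true
  have h6 : D.under i ≠ D.under j := epne false false
  unfold StrictlyBetween at hx ⊢
  have b1 := (D.over i).isLt; have b2 := (D.under i).isLt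
  have b3 := (D.over j).isLt; have b4 := (D.under j).isLt
  rw [Ne, Fin.ext_iff] at h1 h2 h3 h4 h5 h6
  simp only [Xor, relpos_eq] at hx ⊢
  revert hx; split_ifs <;> omega

end ChordDiagram


open ChordDiagram

/-- the odd writhe polynomial is invariant under the Gauss-diagram
Reidemeister move Ω2: if two parallel chords `cm, cn` of `D` have opposite signs,
their over endpoints adjacent on the circle and their under endpoints adjacent on
the circle, then deleting both (yielding `D'`, via the strictly monotone
relabelling `φ` and the chord relabelling `ψ`) does not change the polynomial. -/
theorem stmt_6 {n : ℕ} (D : ChordDiagram (n + 2)) (D' : ChordDiagram n)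
    (cm cn : Fin (n + 2)) (hmn : cm ≠ cn)
    (ψ : Fin n ↪ Fin (n + 2)) (hψ : ∀ k, ψ k ≠ cm ∧ ψ k ≠ cn)
    (φ : Fin (2 * n) → Fin (2 * (n + 2))) (hφ : StrictMono φ)
    (hep : ∀ (k : Fin n) (b : Bool), D.ep (ψ k, b) = φ (D'.ep (k, b)))
    (hsign : ∀ k, D.sign (ψ k) = D'.sign k)
    (hopp : D.sign cm = -D.sign cn)
    (hover : relpos (D.over cm) (D.over cn) = 1 ∨ relpos (D.over cn) (D.over cm) = 1)
    (hunder : relpos (D.under cm) (D.under cn) = 1 ∨ relpos (D.under cn) (D.under cm) = 1)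
    (hpar : ∀ k, k ≠ cm → k ≠ cn → (D.Interlinks cm k ↔ D.Interlinks cn k))
    (hnl : ¬ D.Interlinks cm cn) :
    D.owp = D'.owp := by
  have epneD : ∀ (i j : Fin (n+2)) (b1 b2 : Bool), i ≠ j → D.ep (i, b1) ≠ D.ep (j, b2) :=
    fun i j b1 b2 hij => D.ep.injective.ne (fun hh => hij (congrArg Prod.fst hh))
  have epouD : ∀ i : Fin (n+2), D.over i ≠ D.under i :=
    fun i => D.ep.injective.ne (fun hh => Bool.noConfusion (congrArg Prod.snd hh))
  have havoid : ∀ (a' : Fin (2*n)) (c : Fin (n+2)) (b : Bool), (c = cm ∨ c = cn) →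
      D.ep (c, b) ≠ φ a' := by
    intro a' c b hc
    obtain ⟨⟨k, bb⟩, hk⟩ : ∃ p, D'.ep p = a' := ⟨D'.ep.symm a', D'.ep.apply_symm_apply a'⟩
    rw [← hk, ← hep]
    refine epneD c (ψ k) b bb ?_
    rcases hc with rfl | rfl
    · exact fun hh => (hψ k).1 hh.symm
    · exact fun hh => (hψ k).2 hh.symm
  have hcnS : cn ∉ Finset.univ.image ψ := by
    simp only [Finset.mem_image]
    rintro ⟨k, -, hk⟩
    exact (hψ k).2 hk
  have hcmS : cm ∉ insert cn (Finset.univ.image ψ) := by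
    simp only [Finset.mem_insert, Finset.mem_image]
    rintro (h | ⟨k, -, hk⟩)
    · exact hmn h
    · exact (hψ k).1 hk
  have hinj : ∀ x ∈ (Finset.univ : Finset (Fin n)), ∀ y ∈ Finset.univ, ψ x = ψ y → x = y :=
    fun x _ y _ h => ψ.injective h
  have huniv : (Finset.univ : Finset (Fin (n+2)))
      = insert cm (insert cn (Finset.univ.image ψ)) := by
    symm
    apply Finset.eq_univ_of_card
    rw [Finset.card_insert_of_notMem hcmS, Finset.card_insert_of_notMem hcnS,
      Finset.card_image_of_injective _ ψ.injective]
    simp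
  -- transfer of arc labels
  have harc : ∀ a' : Fin (2*n), D.arcLabel (φ a') = D'.arcLabel a' := by
    intro a'
    have hterm : ∀ k : Fin n,
        (if relpos (φ a') (D.over (ψ k)) < relpos (φ a') (D.under (ψ k))
          then D.sign (ψ k) else 0)
        = (if relpos a' (D'.over k) < relpos a' (D'.under k) then D'.sign k else 0) := by
      intro k
      rw [hsign]
      refine if_congr ?_ rfl rfl
      rw [ChordDiagram.over, under, ChordDiagram.over, under, hep k true, hep k false]
      exact relpos_lt_relpos_map φ hφ a' (D'.ep (k, true)) (D'.ep (k, false))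
    have hcond : (relpos (φ a') (D.over cm) < relpos (φ a') (D.under cm))
        ↔ (relpos (φ a') (D.over cn) < relpos (φ a') (D.under cn)) := by
      set a := φ a' with hadef
      have hOm : D.over cm ≠ a := havoid a' cm true (Or.inl rfl)
      have hOn : D.over cn ≠ a := havoid a' cn true (Or.inr rfl)
      have hUm : D.under cm ≠ a := havoid a' cm false (Or.inl rfl)
      have hUn : D.under cn ≠ a := havoid a' cn false (Or.inr rfl)
      have d1 : relpos a (D.over cm) ≠ relpos a (D.over cn) :=
        relpos_ne_of_ne a (epneD cm cn true true hmn)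
      have d2 : relpos a (D.over cm) ≠ relpos a (D.under cn) :=
        relpos_ne_of_ne a (epneD cm cn true false hmn)
      have d3 : relpos a (D.under cm) ≠ relpos a (D.over cn) :=
        relpos_ne_of_ne a (epneD cm cn false true hmn)
      have d4 : relpos a (D.under cm) ≠ relpos a (D.under cn) :=
        relpos_ne_of_ne a (epneD cm cn false false hmn)
      have d5 : relpos a (D.over cm) ≠ relpos a (D.under cm) :=
        relpos_ne_of_ne a (epouD cm)
      have d6 : relpos a (D.over cn) ≠ relpos a (D.under cn) :=
        relpos_ne_of_ne a (epouD cn)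
      have ho : relpos a (D.over cn) = relpos a (D.over cm) + 1
          ∨ relpos a (D.over cm) = relpos a (D.over cn) + 1 := by
        rcases hover with h | h
        · exact Or.inl (relpos_adj h hOn)
        · exact Or.inr (relpos_adj h hOm)
      have hu : relpos a (D.under cn) = relpos a (D.under cm) + 1
          ∨ relpos a (D.under cm) = relpos a (D.under cn) + 1 := by
        rcases hunder with h | h
        · exact Or.inl (relpos_adj h hUn)
        · exact Or.inr (relpos_adj h hUm)
      omega
    rw [arcLabel_expand, arcLabel_expand, huniv, Finset.sum_insert hcmS,
      Finset.sum_insert hcnS, Finset.sum_image hinj,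
      Finset.sum_congr rfl (fun k _ => hterm k), if_congr hcond rfl rfl]
    have hz : (if relpos (φ a') (D.over cn) < relpos (φ a') (D.under cn)
          then D.sign cm else 0)
        + (if relpos (φ a') (D.over cn) < relpos (φ a') (D.under cn)
          then D.sign cn else 0) = 0 := by
      split_ifs <;> omega
    rw [← add_assoc, hz, zero_add]
  -- transfer of chord values
  have hval : ∀ k, D.chordVal (ψ k) = D'.chordVal k := by
    intro k
    have h1 : D.arcLabel (D.over (ψ k)) = D'.arcLabel (D'.over k) := by
      rw [ChordDiagram.over, ChordDiagram.over, hep k true]; exact harc _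
    have h2 : D.arcLabel (D.under (ψ k)) = D'.arcLabel (D'.under k) := by
      rw [under, under, hep k false]; exact harc _
    rw [chordVal, chordVal, hsign, h1, h2]
  -- transfer of interlinking
  have hsb : ∀ (k : Fin n) (x : Fin (2*n)),
      D.StrictlyBetween (ψ k) (φ x) ↔ D'.StrictlyBetween k x := by
    intro k x
    rw [StrictlyBetween, StrictlyBetween, ChordDiagram.over, ChordDiagram.over, under, under, hep k true, hep k false]
    refine and_congr ?_ ?_
    · rw [relpos_pos_iff, relpos_pos_iff]
      exact hφ.injective.ne_iff
    · exact relpos_lt_relpos_map φ hφ _ _ _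
  have hint : ∀ k j : Fin n, D.Interlinks (ψ k) (ψ j) ↔ D'.Interlinks k j := by
    intro k j
    rw [Interlinks, Interlinks]
    refine and_congr ψ.injective.ne_iff ?_
    have e1 : D.over (ψ j) = φ (D'.over j) := by rw [ChordDiagram.over, ChordDiagram.over, hep j true]
    have e2 : D.under (ψ j) = φ (D'.under j) := by rw [under, under, hep j false]
    rw [e1, e2]
    simp only [hsb]
  have hside : ∀ k : Fin n, (D.Interlinks (ψ k) cm ↔ D.Interlinks (ψ k) cn) := by
    intro k
    constructor
    · intro h
      exact interlinks_symm D ((hpar (ψ k) (hψ k).1 (hψ k).2).mp (interlinks_symm D h))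
    · intro h
      exact interlinks_symm D ((hpar (ψ k) (hψ k).1 (hψ k).2).mpr (interlinks_symm D h))
  -- transfer of oddness
  have hodd : ∀ k : Fin n, (D.OddChord (ψ k) ↔ D'.OddChord k) := by
    intro k
    have hc : D.interlinkCount (ψ k)
        = (if D.Interlinks (ψ k) cm then 1 else 0)
          + ((if D.Interlinks (ψ k) cn then 1 else 0) + D'.interlinkCount k) := by
      rw [interlinkCount, interlinkCount, Finset.card_filter, Finset.card_filter, huniv,
        Finset.sum_insert hcmS, Finset.sum_insert hcnS, Finset.sum_image hinj]
      congr 2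
      refine Finset.sum_congr rfl fun j _ => ?_
      exact if_congr (hint k j) rfl rfl
    rw [OddChord, OddChord, Nat.odd_iff, Nat.odd_iff, hc]
    by_cases h1 : D.Interlinks (ψ k) cm
    · rw [if_pos h1, if_pos ((hside k).mp h1)]; omega
    · rw [if_neg h1, if_neg (fun hh => h1 ((hside k).mpr hh))]; omega
  -- the two deleted chords have equal interlink counts
  have hccount : D.interlinkCount cm = D.interlinkCount cn := by
    rw [interlinkCount, interlinkCount, Finset.card_filter, Finset.card_filter, huniv,
      Finset.sum_insert hcmS, Finset.sum_insert hcnS, Finset.sum_image hinj,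
      Finset.sum_insert hcmS, Finset.sum_insert hcnS, Finset.sum_image hinj]
    have t1 : (if D.Interlinks cm cm then 1 else 0) = 0 := by simp [Interlinks]
    have t2 : (if D.Interlinks cm cn then 1 else 0) = 0 := if_neg hnl
    have t3 : (if D.Interlinks cn cm then 1 else 0) = 0 :=
      if_neg (fun hh => hnl (interlinks_symm D hh))
    have t4 : (if D.Interlinks cn cn then 1 else 0) = 0 := by simp [Interlinks]
    rw [t1, t2, t3, t4, zero_add, zero_add, zero_add, zero_add]
    refine Finset.sum_congr rfl fun j _ => ?_
    exact if_congr (hpar (ψ j) (hψ j).1 (hψ j).2) rfl rfl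
  have hoddmn : D.OddChord cm ↔ D.OddChord cn := by
    rw [OddChord, OddChord, hccount]
  -- the two deleted chords have equal values
  have hA : D.arcLabel (D.over cn) = D.arcLabel (D.over cm) - D.sign cm := by
    rcases hover with h | h
    · have h2 := arcLabel_step D cm true (D.over cn) h
      rw [if_pos rfl] at h2
      rw [show D.ep (cm, true) = D.over cm from rfl] at h2
      rw [h2]; ring
    · have h2 := arcLabel_step D cn true (D.over cm) h
      rw [if_pos rfl] at h2
      rw [show D.ep (cn, true) = D.over cn from rfl] at h2
      rw [h2, hopp]; ring
  have hB : D.arcLabel (D.under cn) = D.arcLabel (D.under cm) + D.sign cm := by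
    rcases hunder with h | h
    · have h2 := arcLabel_step D cm false (D.under cn) h
      rw [if_neg (by simp)] at h2
      rw [show D.ep (cm, false) = D.under cm from rfl] at h2
      rw [h2]
    · have h2 := arcLabel_step D cn false (D.under cm) h
      rw [if_neg (by simp)] at h2
      rw [show D.ep (cn, false) = D.under cn from rfl] at h2
      rw [h2, hopp]; ring
  have hvmn : D.chordVal cm = D.chordVal cn := by
    rw [chordVal, chordVal, hA, hB]
    rcases D.sign_unit cm with s1 | s1 <;> rcases D.sign_unit cn with s2 | s2 <;>
      split_ifs <;> omega
  -- assembling the polynomial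
  have hexp : ∀ (m : ℕ) (E : ChordDiagram m), E.owp
      = ∑ i : Fin m, (if E.OddChord i then C (E.sign i) * T (E.chordVal i) else 0) := by
    intro m E; rw [owp, Finset.sum_filter]
  rw [hexp, hexp, huniv, Finset.sum_insert hcmS, Finset.sum_insert hcnS,
    Finset.sum_image hinj]
  have himg : (∑ k : Fin n,
        if D.OddChord (ψ k) then C (D.sign (ψ k)) * T (D.chordVal (ψ k)) else 0)
      = ∑ k : Fin n, (if D'.OddChord k then C (D'.sign k) * T (D'.chordVal k) else 0) := by
    refine Finset.sum_congr rfl fun k _ => ?_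
    rw [hsign, hval]
    exact if_congr (hodd k) rfl rfl
  rw [himg]
  have hcancel : (if D.OddChord cm then C (D.sign cm) * T (D.chordVal cm) else 0)
      + (if D.OddChord cn then C (D.sign cn) * T (D.chordVal cn) else 0) = 0 := by
    by_cases h : D.OddChord cn
    · rw [if_pos h, if_pos (hoddmn.mpr h), hvmn, hopp, map_neg]
      ring
    · rw [if_neg h, if_neg (fun hh => h (hoddmn.mp hh))]
      ring
  rw [← add_assoc, hcancel, zero_add]
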